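/- (Local-distribution fixed point for MFCG.) Under Assumption (Lip3) and L_p^glob + L_p^loc < |𝒳|c_min, for every fixed Q : 𝒳×𝒜 → ℝ and μ ∈ Δ(𝒳), the map μ' ↦ μ'P^{Q,μ,μ'} on Δ(𝒳) satisfies ‖μ'₁P^{Q,μ,μ'₁} − μ'₂P^{Q,μ,μ'₂}‖₁ ≤ (L_p^loc + 1 − |𝒳|c_min)‖μ'₁ − μ'₂‖₁ with L_p^loc + 1 − |𝒳|c_min < 1, hence has a unique fixed point μ'*_{Q,μ} ∈ Δ(𝒳); moreover ‖μ'*_{Q,μ} − μ'*_{Q₁,μ}‖₁ ≤ (φ|𝒜|/(|𝒳|c_min − L_p^loc))·‖Q − Q₁‖∞ for all Q, Q₁. -/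

import Mathlib

open Finset Filter
open scoped Classical

noncomputable section

variable {X A : Type*}

/-- A probability vector on a finite set. -/
def IsProb [Fintype X] (μ : X → ℝ) : Prop := (∀ x, 0 ≤ μ x) ∧ ∑ x, μ x = 1

/-- ℓ¹ norm of a signed measure / vector on a finite set. -/
def l1 [Fintype X] (μ : X → ℝ) : ℝ := ∑ x, |μ x|

/-- Sup norm of a Q-table. -/
def supQ [Fintype X] [Fintype A] [Nonempty X] [Nonempty A] (Q : X → A → ℝ) : ℝ :=
  Finset.univ.sup' Finset.univ_nonempty (fun xa : X × A => |Q xa.1 xa.2|)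

/-- Minimum of a row of a Q-table (minimum over actions). -/
def minRow [Fintype A] [Nonempty A] (q : A → ℝ) : ℝ :=
  Finset.univ.inf' Finset.univ_nonempty q

/-- The soft-min distribution over actions with parameter φ. -/
def softmin [Fintype A] (φ : ℝ) (z : A → ℝ) (a : A) : ℝ :=
  Real.exp (-φ * z a) / ∑ a', Real.exp (-φ * z a')

/-- The argmin_e policy: uniform over the minimizers, zero elsewhere. -/
def argminE [Fintype A] [Nonempty A] (q : A → ℝ) (a : A) : ℝ :=
  if q a = minRow q then (1 : ℝ) / (Finset.univ.filter fun a' => q a' = minRow q).card else 0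

/-- (P^{π,μ,μ'} ν)(x) = ∑_{x₁} ν(x₁) ∑_a π(a|x₁) p(x|x₁,a,μ,μ') for a kernel with a
global distribution μ and a local distribution μ'. -/
def Ppush3 [Fintype X] [Fintype A] (p : X → A → (X → ℝ) → (X → ℝ) → X → ℝ)
    (π : X → A → ℝ) (μ μ' ν : X → ℝ) (x : X) : ℝ :=
  ∑ x1, ν x1 * ∑ a, π x1 a * p x1 a μ μ' x

/-- The Bellman operator (B_{μ,μ'} Q)(x,a) = f(x,a,μ,μ') + γ ∑_{x'} p(x'|x,a,μ,μ') min_{a'} Q(x',a'). -/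
def bell3 [Fintype X] [Fintype A] [Nonempty A]
    (f : X → A → (X → ℝ) → (X → ℝ) → ℝ) (p : X → A → (X → ℝ) → (X → ℝ) → X → ℝ)
    (γ : ℝ) (μ μ' : X → ℝ) (Q : X → A → ℝ) (x : X) (a : A) : ℝ :=
  f x a μ μ' + γ * ∑ x', p x a μ μ' x' * minRow (Q x')

section AuxMFCG

variable {X A : Type*}

lemma softmin_pos' [Fintype A] [Nonempty A] (φ : ℝ) (z : A → ℝ) (a : A) :
    0 < softmin φ z a :=
  div_pos (Real.exp_pos _) (Finset.sum_pos (fun _ _ => Real.exp_pos _) univ_nonempty)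

lemma softmin_sum' [Fintype A] [Nonempty A] (φ : ℝ) (z : A → ℝ) :
    ∑ a, softmin φ z a = 1 := by
  unfold softmin
  rw [← Finset.sum_div, div_self]
  exact (Finset.sum_pos (fun _ _ => Real.exp_pos _) univ_nonempty).ne'

lemma softmin_lipschitz' [Fintype A] [Nonempty A] (φ : ℝ) (hφ : 0 < φ) (z z' : A → ℝ)
    (δ : ℝ) (hδ : ∀ a, |z a - z' a| ≤ δ) (a : A) :
    |softmin φ z a - softmin φ z' a| ≤ φ * δ := by
  classical
  have hδ0 : 0 ≤ δ := le_trans (abs_nonneg _) (hδ (Classical.arbitrary A))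
  set Δ : A → ℝ := fun b => z' b - z b with hΔ
  have hΔle : ∀ b, |Δ b| ≤ δ := fun b => by
    rw [hΔ]; simpa [abs_sub_comm] using hδ b
  set E : ℝ → A → ℝ := fun t b => Real.exp (-φ * (z b + t * Δ b)) with hE
  set S : ℝ → ℝ := fun t => ∑ b, E t b with hS
  have hSpos : ∀ t, 0 < S t := fun t =>
    Finset.sum_pos (fun b _ => Real.exp_pos _) univ_nonempty
  set F : ℝ → ℝ := fun t => E t a / S t with hF
  set D : ℝ → ℝ := fun t =>
    ((-φ * Δ a * E t a) * S t - E t a * ∑ b, -φ * Δ b * E t b) / (S t)^2 with hD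
  have hderiv : ∀ t, HasDerivAt F (D t) t := by
    intro t
    have hEb : ∀ b, HasDerivAt (fun t => E t b) (-φ * Δ b * E t b) t := by
      intro b
      have h1 : HasDerivAt (fun t : ℝ => -φ * (z b + t * Δ b)) (-φ * Δ b) t := by
        have := (((hasDerivAt_id t).mul_const (Δ b)).const_add (z b)).const_mul (-φ)
        simpa using this
      simpa [hE, mul_comm] using h1.exp
    have hSd : HasDerivAt S (∑ b, -φ * Δ b * E t b) t := by
      simpa [hS] using HasDerivAt.fun_sum (fun b _ => hEb b)
    simpa [hD] using (hEb a).fun_div hSd (hSpos t).ne'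
  have hbound : ∀ t, |D t| ≤ φ * δ := by
    intro t
    have hEpos : ∀ b, 0 < E t b := fun b => Real.exp_pos _
    have hnum : (-φ * Δ a * E t a) * S t - E t a * ∑ b, -φ * Δ b * E t b
        = -φ * E t a * ∑ b, (Δ a - Δ b) * E t b := by
      rw [hS, Finset.mul_sum, Finset.mul_sum, Finset.mul_sum, ← Finset.sum_sub_distrib]
      congr 1; ext b; ring
    have habs : |∑ b, (Δ a - Δ b) * E t b| ≤ 2 * δ * (S t - E t a) := by
      have : ∑ b, (Δ a - Δ b) * E t b = ∑ b ∈ univ.erase a, (Δ a - Δ b) * E t b := by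
        rw [← Finset.sum_erase_add _ _ (mem_univ a)]; simp
      rw [this]
      refine (Finset.abs_sum_le_sum_abs _ _).trans ?_
      have h2 : ∀ b ∈ univ.erase a, |(Δ a - Δ b) * E t b| ≤ (2 * δ) * E t b := by
        intro b _
        rw [abs_mul, abs_of_pos (hEpos b)]
        have : |Δ a - Δ b| ≤ 2 * δ := by
          calc |Δ a - Δ b| ≤ |Δ a| + |Δ b| := abs_sub _ _
            _ ≤ 2 * δ := by linarith [hΔle a, hΔle b]
        exact mul_le_mul_of_nonneg_right this (hEpos b).le
      refine (Finset.sum_le_sum h2).trans ?_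
      rw [← Finset.mul_sum]
      have hSe : ∑ b ∈ univ.erase a, E t b + E t a = S t :=
        Finset.sum_erase_add univ (E t) (mem_univ a)
      have : ∑ b ∈ univ.erase a, E t b = S t - E t a := by linarith
      rw [this]
    have hEleS : E t a ≤ S t := Finset.single_le_sum (fun b _ => (hEpos b).le) (mem_univ a)
    simp only [hD]
    rw [hnum]
    rw [abs_div, abs_mul, abs_mul]
    rw [abs_of_pos (hEpos a), abs_neg, abs_of_pos hφ]
    have hS2 : |S t ^ 2| = S t ^ 2 := abs_of_pos (pow_pos (hSpos t) 2)
    rw [hS2, div_le_iff₀ (pow_pos (hSpos t) 2)]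
    calc φ * E t a * |∑ b, (Δ a - Δ b) * E t b|
        ≤ φ * E t a * (2 * δ * (S t - E t a)) := by
          exact mul_le_mul_of_nonneg_left habs (by positivity)
      _ ≤ φ * δ * S t ^ 2 := by
          nlinarith [mul_nonneg (mul_nonneg hφ.le hδ0) (sq_nonneg (S t - E t a)),
            mul_nonneg (mul_nonneg hφ.le hδ0) (sq_nonneg (E t a))]
  have hmvt : |F 1 - F 0| ≤ φ * δ * |(1:ℝ) - 0| := by
    have := Convex.norm_image_sub_le_of_norm_hasDerivWithin_le
      (f := F) (f' := D) (C := φ * δ) (s := Set.univ)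
      (fun t _ => (hderiv t).hasDerivWithinAt)
      (fun t _ => by simpa [Real.norm_eq_abs] using hbound t)
      convex_univ (Set.mem_univ 0) (Set.mem_univ 1)
    simpa [Real.norm_eq_abs] using this
  have hF0 : F 0 = softmin φ z a := by simp [hF, hE, hS, softmin]
  have hF1 : F 1 = softmin φ z' a := by simp [hF, hE, hS, hΔ, softmin]
  rw [← hF0, ← hF1, abs_sub_comm]
  simpa using hmvt

/-- Dobrushin-type contraction for a row-stochastic matrix with entries bounded
below by `c`, applied to a zero-sum vector. -/
lemma dobrushin_aux [Fintype X] (P : X → X → ℝ) (c : ℝ)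
    (hc : ∀ x x', c ≤ P x x') (hrow : ∀ x, ∑ x', P x x' = 1)
    (d : X → ℝ) (hd : ∑ x, d x = 0) :
    ∑ x', |∑ x, d x * P x x'| ≤ (1 - (Fintype.card X : ℝ) * c) * ∑ x, |d x| := by
  have key : ∀ x', |∑ x, d x * P x x'| ≤ ∑ x, |d x| * (P x x' - c) := by
    intro x'
    have h1 : ∑ x, d x * P x x' = ∑ x, d x * (P x x' - c) := by
      simp only [mul_sub]
      rw [Finset.sum_sub_distrib, ← Finset.sum_mul, hd, zero_mul, sub_zero]
    rw [h1]
    refine (Finset.abs_sum_le_sum_abs _ _).trans ?_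
    refine Finset.sum_le_sum fun x _ => ?_
    rw [abs_mul, abs_of_nonneg (show (0:ℝ) ≤ P x x' - c by linarith [hc x x'])]
  calc ∑ x', |∑ x, d x * P x x'| ≤ ∑ x', ∑ x, |d x| * (P x x' - c) :=
      Finset.sum_le_sum fun x' _ => key x'
    _ = ∑ x, |d x| * (1 - (Fintype.card X : ℝ) * c) := by
        rw [Finset.sum_comm]
        refine Finset.sum_congr rfl fun x _ => ?_
        rw [← Finset.mul_sum]
        congr 1
        rw [Finset.sum_sub_distrib, hrow x, Finset.sum_const, Finset.card_univ,
          nsmul_eq_mul]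
    _ = _ := by rw [← Finset.sum_mul]; ring

lemma l1_mix' {I Y : Type*} [Fintype I] [Fintype Y] (c : I → ℝ) (K : I → Y → ℝ) :
    ∑ y, |∑ i, c i * K i y| ≤ ∑ i, |c i| * ∑ y, |K i y| := by
  calc ∑ y, |∑ i, c i * K i y| ≤ ∑ y, ∑ i, |c i * K i y| :=
      Finset.sum_le_sum fun y _ => Finset.abs_sum_le_sum_abs _ _
    _ = ∑ i, ∑ y, |c i| * |K i y| := by rw [Finset.sum_comm]; simp [abs_mul]
    _ = _ := by simp [Finset.mul_sum]

lemma l1_add_le' [Fintype X] (f g : X → ℝ) :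
    l1 (fun x => f x + g x) ≤ l1 f + l1 g := by
  unfold l1
  rw [← Finset.sum_add_distrib]
  exact Finset.sum_le_sum fun x _ => abs_add_le _ _

lemma avg_le' {I : Type*} [Fintype I] (ν g : I → ℝ) (hν : ∀ i, 0 ≤ ν i)
    (hs : ∑ i, ν i = 1) (C : ℝ) (hg : ∀ i, g i ≤ C) : ∑ i, ν i * g i ≤ C := by
  calc ∑ i, ν i * g i ≤ ∑ i, ν i * C :=
      Finset.sum_le_sum fun i _ => mul_le_mul_of_nonneg_left (hg i) (hν i)
    _ = C := by rw [← Finset.sum_mul, hs, one_mul]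

end AuxMFCG

/-- local-distribution fixed point for MFCG: for fixed Q and global μ,
the map μ' ↦ μ'P^{Q,μ,μ'} is a strict contraction with constant L_p^loc + 1 − |𝒳|c_min < 1,
hence has a unique fixed point μ'*_{Q,μ}; moreover Q ↦ μ'*_{Q,μ} is
(φ|𝒜|/(|𝒳|c_min − L_p^loc))-Lipschitz. -/
theorem mfcg_local_fixed_point [Fintype X] [Fintype A] [Nonempty X] [Nonempty A]
    (φ : ℝ) (hφ0 : 0 < φ)
    (p : X → A → (X → ℝ) → (X → ℝ) → X → ℝ)
    (hp0 : ∀ x a μ μ' x', IsProb μ → IsProb μ' → 0 ≤ p x a μ μ' x')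
    (hp1 : ∀ x a μ μ', IsProb μ → IsProb μ' → ∑ x', p x a μ μ' x' = 1)
    (cmin : ℝ) (hcmin0 : 0 ≤ cmin)
    (hcmin : ∀ x a μ μ' x', IsProb μ → IsProb μ' → cmin ≤ p x a μ μ' x')
    (Lpglob Lploc : ℝ) (hLpglob0 : 0 ≤ Lpglob) (hLploc0 : 0 ≤ Lploc)
    (hLpglob : ∀ x a μ μ₁ μ', IsProb μ → IsProb μ₁ → IsProb μ' →
      ∑ x', |p x a μ μ' x' - p x a μ₁ μ' x'| ≤ Lpglob * l1 (fun y => μ y - μ₁ y))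
    (hLploc : ∀ x a μ μ' μ'₁, IsProb μ → IsProb μ' → IsProb μ'₁ →
      ∑ x', |p x a μ μ' x' - p x a μ μ'₁ x'| ≤ Lploc * l1 (fun y => μ' y - μ'₁ y))
    (hLpc : Lpglob + Lploc < (Fintype.card X : ℝ) * cmin)
    -- μ'*_{Q,μ} : the fixed point of μ' ↦ μ'P^{Q,μ,μ'}
    (mups : (X → A → ℝ) → (X → ℝ) → X → ℝ)
    (hmups : ∀ (Q : X → A → ℝ) (μ : X → ℝ), IsProb μ →
      IsProb (mups Q μ) ∧
        Ppush3 p (fun x1 => softmin φ (Q x1)) μ (mups Q μ) (mups Q μ) = mups Q μ) :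
    (∀ (Q : X → A → ℝ) (μ μ'₁ μ'₂ : X → ℝ), IsProb μ → IsProb μ'₁ → IsProb μ'₂ →
        l1 (fun x => Ppush3 p (fun x1 => softmin φ (Q x1)) μ μ'₁ μ'₁ x
              - Ppush3 p (fun x1 => softmin φ (Q x1)) μ μ'₂ μ'₂ x)
          ≤ (Lploc + 1 - (Fintype.card X : ℝ) * cmin) * l1 (fun x => μ'₁ x - μ'₂ x))
    ∧ (Lploc + 1 - (Fintype.card X : ℝ) * cmin < 1)
    ∧ (∀ (Q : X → A → ℝ) (μ : X → ℝ), IsProb μ →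
        ∃! μ' : X → ℝ, IsProb μ' ∧ Ppush3 p (fun x1 => softmin φ (Q x1)) μ μ' μ' = μ')
    ∧ (∀ (Q Q₁ : X → A → ℝ) (μ : X → ℝ), IsProb μ →
        l1 (fun x => mups Q μ x - mups Q₁ μ x)
          ≤ φ * (Fintype.card A : ℝ) / ((Fintype.card X : ℝ) * cmin - Lploc)
              * supQ (fun x a => Q x a - Q₁ x a)) := by
    classical
  set n : ℝ := (Fintype.card X : ℝ) with hn
  set k : ℝ := Lploc + 1 - n * cmin with hk
  -- Kernel matrix facts
  have hK_ge : ∀ (Q : X → A → ℝ) (μ μ' : X → ℝ), IsProb μ → IsProb μ' → ∀ x1 x,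
      cmin ≤ ∑ a, softmin φ (Q x1) a * p x1 a μ μ' x := by
    intro Q μ μ' hμ hμ' x1 x
    have h1 : cmin = ∑ a, softmin φ (Q x1) a * cmin := by
      rw [← Finset.sum_mul, softmin_sum', one_mul]
    rw [h1]
    exact Finset.sum_le_sum fun a _ =>
      mul_le_mul_of_nonneg_left (hcmin x1 a μ μ' x hμ hμ') (softmin_pos' φ _ a).le
  have hK_row : ∀ (Q : X → A → ℝ) (μ μ' : X → ℝ), IsProb μ → IsProb μ' → ∀ x1,
      ∑ x, ∑ a, softmin φ (Q x1) a * p x1 a μ μ' x = 1 := by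
    intro Q μ μ' hμ hμ' x1
    rw [Finset.sum_comm]
    have h1 : ∀ a, ∑ x, softmin φ (Q x1) a * p x1 a μ μ' x = softmin φ (Q x1) a := by
      intro a
      rw [← Finset.mul_sum, hp1 x1 a μ μ' hμ hμ', mul_one]
    rw [Finset.sum_congr rfl fun a _ => h1 a]
    exact softmin_sum' φ _
  -- PART 1 : contraction
  have part1 : ∀ (Q : X → A → ℝ) (μ μ'₁ μ'₂ : X → ℝ), IsProb μ → IsProb μ'₁ → IsProb μ'₂ →
      l1 (fun x => Ppush3 p (fun x1 => softmin φ (Q x1)) μ μ'₁ μ'₁ x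
            - Ppush3 p (fun x1 => softmin φ (Q x1)) μ μ'₂ μ'₂ x)
        ≤ k * l1 (fun x => μ'₁ x - μ'₂ x) := by
    intro Q μ μ'₁ μ'₂ hμ h1 h2
    set K1 : X → X → ℝ := fun x1 x => ∑ a, softmin φ (Q x1) a * p x1 a μ μ'₁ x with hK1
    set K2 : X → X → ℝ := fun x1 x => ∑ a, softmin φ (Q x1) a * p x1 a μ μ'₂ x with hK2
    set d : X → ℝ := fun x => μ'₁ x - μ'₂ x with hdd
    have hd0 : ∑ x, d x = 0 := by
      simp only [hdd]; rw [Finset.sum_sub_distrib, h1.2, h2.2, sub_self]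
    have hdecomp : (fun x => Ppush3 p (fun x1 => softmin φ (Q x1)) μ μ'₁ μ'₁ x
        - Ppush3 p (fun x1 => softmin φ (Q x1)) μ μ'₂ μ'₂ x)
        = fun x => (∑ x1, d x1 * K1 x1 x) + ∑ x1, μ'₂ x1 * (K1 x1 x - K2 x1 x) := by
      funext x
      show (∑ x1, μ'₁ x1 * K1 x1 x) - (∑ x1, μ'₂ x1 * K2 x1 x) = _
      rw [← Finset.sum_sub_distrib, ← Finset.sum_add_distrib]
      exact Finset.sum_congr rfl fun x1 _ => by simp only [hdd]; ring
    rw [hdecomp]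
    have hA : l1 (fun x => ∑ x1, d x1 * K1 x1 x) ≤ (1 - n * cmin) * l1 d := by
      exact dobrushin_aux K1 cmin (fun x1 x => hK_ge Q μ μ'₁ hμ h1 x1 x)
        (fun x1 => hK_row Q μ μ'₁ hμ h1 x1) d hd0
    have hB : l1 (fun x => ∑ x1, μ'₂ x1 * (K1 x1 x - K2 x1 x)) ≤ Lploc * l1 d := by
      refine le_trans (l1_mix' μ'₂ (fun x1 x => K1 x1 x - K2 x1 x)) ?_
      have hinner : ∀ x1, ∑ x, |K1 x1 x - K2 x1 x| ≤ Lploc * l1 d := by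
        intro x1
        have hKdiff : ∀ x, K1 x1 x - K2 x1 x
            = ∑ a, softmin φ (Q x1) a * (p x1 a μ μ'₁ x - p x1 a μ μ'₂ x) := by
          intro x
          simp only [hK1, hK2, ← Finset.sum_sub_distrib, mul_sub]
        calc ∑ x, |K1 x1 x - K2 x1 x|
            = ∑ x, |∑ a, softmin φ (Q x1) a * (p x1 a μ μ'₁ x - p x1 a μ μ'₂ x)| := by
              exact Finset.sum_congr rfl fun x _ => by rw [hKdiff x]
          _ ≤ ∑ a, |softmin φ (Q x1) a| * ∑ x, |p x1 a μ μ'₁ x - p x1 a μ μ'₂ x| :=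
              l1_mix' _ _
          _ ≤ Lploc * l1 d := by
              have hsm : ∑ a, |softmin φ (Q x1) a| = 1 :=
                (Finset.sum_congr rfl fun a _ =>
                  abs_of_pos (softmin_pos' φ _ a)).trans (softmin_sum' φ _)
              exact avg_le' (fun a => |softmin φ (Q x1) a|) _
                (fun a => abs_nonneg _) hsm _ (fun a => hLploc x1 a μ μ'₁ μ'₂ hμ h1 h2)
      have hsum2 : ∑ x1, |μ'₂ x1| = 1 :=
        (Finset.sum_congr rfl fun x1 _ => abs_of_nonneg (h2.1 x1)).trans h2.2
      exact avg_le' (fun x1 => |μ'₂ x1|) _ (fun x1 => abs_nonneg _) hsum2 _ hinner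
    refine le_trans (l1_add_le' _ _) ?_
    have hsum := add_le_add hA hB
    have hkk : (1 - n * cmin) * l1 d + Lploc * l1 d = k * l1 d := by rw [hk]; ring
    linarith
  -- PART 2
  have part2 : k < 1 := by rw [hk]; simp only [hn]; linarith
  have hkpos : 0 < 1 - k := by linarith
  have l1_nonneg : ∀ (f : X → ℝ), 0 ≤ l1 f := fun f =>
    Finset.sum_nonneg fun x _ => abs_nonneg _
  have l1_eq_zero : ∀ (f g : X → ℝ), l1 (fun x => f x - g x) ≤ 0 → f = g := by
    intro f g hfg
    funext x
    have hx : |f x - g x| ≤ 0 := by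
      refine le_trans ?_ hfg
      exact Finset.single_le_sum (f := fun x => |f x - g x|)
        (fun x _ => abs_nonneg _) (mem_univ x)
    have := abs_nonneg (f x - g x)
    have : |f x - g x| = 0 := le_antisymm hx this
    have := abs_eq_zero.mp this
    linarith
  -- PART 3
  have part3 : ∀ (Q : X → A → ℝ) (μ : X → ℝ), IsProb μ →
      ∃! μ' : X → ℝ, IsProb μ' ∧ Ppush3 p (fun x1 => softmin φ (Q x1)) μ μ' μ' = μ' := by
    intro Q μ hμ
    obtain ⟨hm, hfix⟩ := hmups Q μ hμ
    refine ⟨mups Q μ, ⟨hm, hfix⟩, ?_⟩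
    rintro y ⟨hy, hyfix⟩
    have h := part1 Q μ y (mups Q μ) hμ hy hm
    simp only [hyfix, hfix] at h
    have hL0 : 0 ≤ l1 (fun x => y x - mups Q μ x) := l1_nonneg _
    have hL : l1 (fun x => y x - mups Q μ x) ≤ 0 := by nlinarith
    exact l1_eq_zero _ _ hL
  refine ⟨part1, part2, part3, ?_⟩
  -- PART 4
  intro Q Q₁ μ hμ
  obtain ⟨hm, hfix⟩ := hmups Q μ hμ
  obtain ⟨hm1, hfix1⟩ := hmups Q₁ μ hμ
  set δ : ℝ := supQ (fun x a => Q x a - Q₁ x a) with hδ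
  have hδle : ∀ x a, |Q x a - Q₁ x a| ≤ δ := by
    intro x a
    exact Finset.le_sup' (fun xa : X × A => |Q xa.1 xa.2 - Q₁ xa.1 xa.2|) (mem_univ (x, a))
  have hδ0 : 0 ≤ δ :=
    le_trans (abs_nonneg _) (hδle (Classical.arbitrary X) (Classical.arbitrary A))
  set ν : X → ℝ := mups Q μ with hν
  set ν₁ : X → ℝ := mups Q₁ μ with hν₁
  set L : ℝ := l1 (fun x => ν x - ν₁ x) with hL
  have hL0 : 0 ≤ L := l1_nonneg _
  -- the policy-difference term
  have term2 : l1 (fun x => Ppush3 p (fun x1 => softmin φ (Q x1)) μ ν₁ ν₁ x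
      - Ppush3 p (fun x1 => softmin φ (Q₁ x1)) μ ν₁ ν₁ x)
      ≤ φ * (Fintype.card A : ℝ) * δ := by
    have hdecomp : (fun x => Ppush3 p (fun x1 => softmin φ (Q x1)) μ ν₁ ν₁ x
        - Ppush3 p (fun x1 => softmin φ (Q₁ x1)) μ ν₁ ν₁ x)
        = fun x => ∑ x1, ν₁ x1 *
            ∑ a, (softmin φ (Q x1) a - softmin φ (Q₁ x1) a) * p x1 a μ ν₁ x := by
      funext x
      show (∑ x1, ν₁ x1 * ∑ a, softmin φ (Q x1) a * p x1 a μ ν₁ x)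
          - (∑ x1, ν₁ x1 * ∑ a, softmin φ (Q₁ x1) a * p x1 a μ ν₁ x) = _
      rw [← Finset.sum_sub_distrib]
      refine Finset.sum_congr rfl fun x1 _ => ?_
      rw [← mul_sub, ← Finset.sum_sub_distrib]
      congr 1
      exact Finset.sum_congr rfl fun a _ => by ring
    rw [hdecomp]
    refine le_trans (l1_mix' ν₁
      (fun x1 x => ∑ a, (softmin φ (Q x1) a - softmin φ (Q₁ x1) a) * p x1 a μ ν₁ x)) ?_
    have hinner : ∀ x1,
        ∑ x, |∑ a, (softmin φ (Q x1) a - softmin φ (Q₁ x1) a) * p x1 a μ ν₁ x|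
        ≤ φ * (Fintype.card A : ℝ) * δ := by
      intro x1
      refine le_trans (l1_mix' (fun a => softmin φ (Q x1) a - softmin φ (Q₁ x1) a)
        (fun a x => p x1 a μ ν₁ x)) ?_
      have hp_l1 : ∀ a, ∑ x, |p x1 a μ ν₁ x| = 1 := by
        intro a
        rw [show (∑ x, |p x1 a μ ν₁ x|) = ∑ x, p x1 a μ ν₁ x from
          Finset.sum_congr rfl fun x _ => abs_of_nonneg (hp0 x1 a μ ν₁ x hμ hm1)]
        exact hp1 x1 a μ ν₁ hμ hm1
      calc ∑ a, |softmin φ (Q x1) a - softmin φ (Q₁ x1) a| * ∑ x, |p x1 a μ ν₁ x|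
          = ∑ a, |softmin φ (Q x1) a - softmin φ (Q₁ x1) a| := by
            refine Finset.sum_congr rfl fun a _ => ?_
            rw [hp_l1 a, mul_one]
        _ ≤ ∑ _a : A, φ * δ := Finset.sum_le_sum fun a _ =>
            softmin_lipschitz' φ hφ0 (Q x1) (Q₁ x1) δ (fun b => hδle x1 b) a
        _ = φ * (Fintype.card A : ℝ) * δ := by
            rw [Finset.sum_const, Finset.card_univ, nsmul_eq_mul]; ring
    have hsum1 : ∑ x1, |ν₁ x1| = 1 :=
      (Finset.sum_congr rfl fun x1 _ => abs_of_nonneg (hm1.1 x1)).trans hm1.2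
    exact avg_le' (fun x1 => |ν₁ x1|) _ (fun x1 => abs_nonneg _) hsum1 _ hinner
  have key : L ≤ k * L + φ * (Fintype.card A : ℝ) * δ := by
    have hre : (fun x => ν x - ν₁ x)
        = fun x => (Ppush3 p (fun x1 => softmin φ (Q x1)) μ ν ν x
              - Ppush3 p (fun x1 => softmin φ (Q x1)) μ ν₁ ν₁ x)
            + (Ppush3 p (fun x1 => softmin φ (Q x1)) μ ν₁ ν₁ x
              - Ppush3 p (fun x1 => softmin φ (Q₁ x1)) μ ν₁ ν₁ x) := by
      funext x
      have e1 := congrFun hfix x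
      have e2 := congrFun hfix1 x
      rw [← e1, ← e2]
      ring
    have hfin := le_trans (l1_add_le' _ _)
      (add_le_add (part1 Q μ ν ν₁ hμ hm hm1) term2)
    calc L = l1 (fun x => (Ppush3 p (fun x1 => softmin φ (Q x1)) μ ν ν x
              - Ppush3 p (fun x1 => softmin φ (Q x1)) μ ν₁ ν₁ x)
            + (Ppush3 p (fun x1 => softmin φ (Q x1)) μ ν₁ ν₁ x
              - Ppush3 p (fun x1 => softmin φ (Q₁ x1)) μ ν₁ ν₁ x)) := by rw [hL, hre]
      _ ≤ k * l1 (fun x => ν x - ν₁ x) + φ * (Fintype.card A : ℝ) * δ := hfin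
      _ = k * L + φ * (Fintype.card A : ℝ) * δ := by rw [hL]
  have hpos : 0 < n * cmin - Lploc := by simp only [hn]; linarith
  rw [div_mul_eq_mul_div, le_div_iff₀ hpos]
  rw [hk] at key
  linarith [key]
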